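/- Consider horizon T ≥ 2 and the COLDQ setup with strongly convex losses: 𝒳 ⊆ ℝ^p convex with ‖x − y‖ ≤ R for all x, y ∈ 𝒳 (R > 0); for some μ > 0 and all t, f_t admits a map ∇f_t with ‖∇f_t(x)‖ ≤ D and f_t(y) ≥ f_t(x) + ⟨∇f_t(x), y − x⟩ + μ·‖y − x‖² on 𝒳; convex constraints g_t^n (1 ≤ n ≤ N) with |g_t^n(x)| ≤ G on 𝒳; step sizes α_t = μ·t; parameters η = 1/T, γ = ε·T with ε ∈ (0, G); x_1 ∈ 𝒳 arbitrary, Q_1^n = γ, and for t ∈ {2,…,T}: x_t minimizes Φ_t(x) = ⟨∇f_{t−1}(x_{t−1}), x − x_{t−1}⟩ + α_{t−1}·‖x − x_{t−1}‖² + Σ_{n=1}^N Q_{t−1}^n·[g_{t−1}^n(x)]_+ over 𝒳 and Q_t^n = max{(1−η)·Q_{t−1}^n + [g_t^n(x_t)]_+ , γ}. Suppose there is a fixed x* ∈ 𝒳 with g_t^n(x*) ≤ 0 for all t, n, and that for all x ∈ 𝒳 and t ≥ 2, (Σ_{n=1}^N (g_t^n(x) − g_{t−1}^n(x))²)^{1/2}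 ≤ B_t with Σ_{t=2}^T B_t ≤ C_g·T^{V_g} for some fixed V_g ∈ [0,1] and constant C_g ≥ 0. Then the hard constraint violation satisfies Σ_{n=1}^N Σ_{t=1}^T [g_t^n(x_t)]_+ ≤ ((G·√N·C_g + D²/(4μ) + D·R + 2·N·G² + μ·R²)/ε + N·G)·T^{V_g}. -/

import Mathlib

open scoped RealInnerProductSpace

lemma combNormSq {E : Type*} [NormedAddCommGroup E] [InnerProductSpace ℝ E] (a b : E) (l : ℝ) :
    ‖(1-l)•a + l•b‖^2 = (1-l)*‖a‖^2 + l*‖b‖^2 - l*(1-l)*‖a-b‖^2 := by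
  have h : ∀ z : E, ‖z‖^2 = ⟪z,z⟫ := fun z => (real_inner_self_eq_norm_sq z).symm
  simp only [h, inner_sub_left, inner_sub_right, inner_add_left, inner_add_right,
    real_inner_smul_left, real_inner_smul_right, real_inner_comm a b]
  ring

lemma tele_sum (c : ℕ → ℝ) {T : ℕ} (hT : 2 ≤ T) :
    ∑ t ∈ Finset.Icc 2 T, (c (t-1) - c t) = c 1 - c T := by
  induction T, hT using Nat.le_induction with
  | base => simp
  | succ T hT ih =>
    rw [Finset.sum_Icc_succ_top (by omega), ih]
    simp

lemma aux_min {E : Type*} [NormedAddCommGroup E] [InnerProductSpace ℝ E]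
    {𝒳 : Set E} (hXconv : Convex ℝ 𝒳)
    (Gv c u v : E) (huX : u ∈ 𝒳) (hvX : v ∈ 𝒳)
    (q : ℝ) (hq : 0 ≤ q)
    (P : E → ℝ)
    (hPconv : ∀ l : ℝ, 0 < l → l < 1 → P ((1-l)•u + l•v) ≤ (1-l) * P u + l * P v)
    (hPv : P v = 0)
    (hmin : ∀ y ∈ 𝒳, ⟪Gv, u - c⟫ + q*‖u-c‖^2 + P u ≤ ⟪Gv, y - c⟫ + q*‖y-c‖^2 + P y) :
    P u ≤ ⟪Gv, v - u⟫ + q*(‖v-c‖^2 - ‖v-u‖^2) := by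
  set A := ⟪Gv, u - c⟫ + q*‖u-c‖^2 + P u with hA
  set W := ‖u - v‖^2 with hW
  have hW0 : 0 ≤ W := by positivity
  have step1 : ∀ l : ℝ, 0 < l → l < 1 →
      A + q*(1-l)*W ≤ ⟪Gv, v - c⟫ + q*‖v-c‖^2 := by
    intro l hl0 hl1
    have hy : (1-l)•u + l•v ∈ 𝒳 := hXconv huX hvX (by linarith) (le_of_lt hl0) (by ring)
    have hmin_y := hmin _ hy
    have hyc : ((1-l)•u + l•v) - c = (1-l)•(u - c) + l•(v - c) := by
      rw [smul_sub, smul_sub]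
      rw [show (1-l)•u - (1-l)•c + (l•v - l•c) = ((1-l)•u + l•v) - ((1-l)•c + l•c) by abel]
      congr 1
      rw [← add_smul]
      simp
    have h1 : ⟪Gv, ((1-l)•u + l•v) - c⟫ = (1-l)*⟪Gv, u-c⟫ + l*⟪Gv, v - c⟫ := by
      rw [hyc, inner_add_right, real_inner_smul_right, real_inner_smul_right]
    have h2 : ‖((1-l)•u + l•v) - c‖^2
        = (1-l)*‖u - c‖^2 + l*‖v - c‖^2 - l*(1-l)*W := by
      rw [hyc, combNormSq, show (u-c)-(v-c) = u - v by abel]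
    have h3 := hPconv l hl0 hl1
    rw [h1, h2] at hmin_y
    have h5 : A ≤ (1-l)*A + l*(⟪Gv, v - c⟫ + q*‖v-c‖^2) - q*l*(1-l)*W := by
      rw [hPv] at h3
      rw [hA]
      calc ⟪Gv, u - c⟫ + q*‖u-c‖^2 + P u
          ≤ ((1-l)*⟪Gv, u-c⟫ + l*⟪Gv, v - c⟫)
            + q*((1-l)*‖u - c‖^2 + l*‖v - c‖^2 - l*(1-l)*W)
            + P ((1-l)•u + l•v) := hmin_y
        _ ≤ ((1-l)*⟪Gv, u-c⟫ + l*⟪Gv, v - c⟫)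
            + q*((1-l)*‖u - c‖^2 + l*‖v - c‖^2 - l*(1-l)*W)
            + ((1-l) * P u + l * 0) := by linarith
        _ = (1-l)*(⟪Gv, u - c⟫ + q*‖u-c‖^2 + P u)
            + l*(⟪Gv, v - c⟫ + q*‖v-c‖^2) - q*l*(1-l)*W := by ring
    have h6 : l * (A + q*(1-l)*W) ≤ l * (⟪Gv, v - c⟫ + q*‖v-c‖^2) := by nlinarith [h5]
    exact (mul_le_mul_iff_right₀ hl0).mp h6
  have step2 : A + q*W ≤ ⟪Gv, v - c⟫ + q*‖v-c‖^2 := by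
    refine le_of_forall_pos_le_add ?_
    intro e he
    set l := min (e/(q*W+1)) (1/2) with hl
    have hqW1 : (0:ℝ) < q*W + 1 := by nlinarith
    have hl0 : 0 < l := lt_min (div_pos he hqW1) (by norm_num)
    have hl1 : l < 1 := lt_of_le_of_lt (min_le_right _ _) (by norm_num)
    have h := step1 l hl0 hl1
    have hle : l * (q*W) ≤ e := by
      calc l * (q*W) ≤ (e/(q*W+1)) * (q*W) :=
            mul_le_mul_of_nonneg_right (min_le_left _ _) (by positivity)
        _ ≤ e := by
            rw [div_mul_eq_mul_div, div_le_iff₀ hqW1]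
            nlinarith
    nlinarith [h]
  have e1 : ⟪Gv, v - u⟫ = ⟪Gv, v - c⟫ - ⟪Gv, u - c⟫ := by
    rw [← inner_sub_right, show (v-c)-(u-c) = v - u by abel]
  have e2 : ‖u - v‖ = ‖v - u‖ := norm_sub_rev _ _
  have hqc : 0 ≤ q * ‖u - c‖^2 := by positivity
  rw [hA, hW, e2] at step2
  linarith [step2]



set_option maxHeartbeats 1000000 in
/-- Corollary 2 (violation part): COLDQ with `α_t = μ·t`, `η = 1/T`, `γ = ε·T`
achieves `O(T^{V_g})` hard constraint violation for strongly convex losses. -/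
theorem coldq_hard_violation_strongly_convex_explicit
    (p N T : ℕ) (hT : 2 ≤ T) (R D G μ η γ ε Vg Cg : ℝ)
    (hR : 0 < R) (hμ : 0 < μ)
    (hVg0 : 0 ≤ Vg) (hVg1 : Vg ≤ 1) (hCg : 0 ≤ Cg)
    (hε0 : 0 < ε) (hεG : ε < G)
    (hη : η = 1 / (T : ℝ)) (hγ : γ = ε * (T : ℝ))
    (𝒳 : Set (EuclideanSpace ℝ (Fin p)))
    (hXconv : Convex ℝ 𝒳)
    (hXbdd : ∀ x ∈ 𝒳, ∀ y ∈ 𝒳, ‖x - y‖ ≤ R)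
    (f : ℕ → EuclideanSpace ℝ (Fin p) → ℝ)
    (gradf : ℕ → EuclideanSpace ℝ (Fin p) → EuclideanSpace ℝ (Fin p))
    (hgradD : ∀ t, ∀ x ∈ 𝒳, ‖gradf t x‖ ≤ D)
    (hstrong : ∀ t, ∀ x ∈ 𝒳, ∀ y ∈ 𝒳,
      f t x + ⟪gradf t x, y - x⟫ + μ * ‖y - x‖ ^ 2 ≤ f t y)
    (g : ℕ → Fin N → EuclideanSpace ℝ (Fin p) → ℝ)
    (hgconv : ∀ t n, ConvexOn ℝ 𝒳 (g t n))
    (hgG : ∀ t n, ∀ x ∈ 𝒳, |g t n x| ≤ G)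
    (α : ℕ → ℝ) (hα : ∀ t, α t = μ * t)
    (x : ℕ → EuclideanSpace ℝ (Fin p)) (hx1 : x 1 ∈ 𝒳)
    (Q : ℕ → Fin N → ℝ) (hQ1 : ∀ n, Q 1 n = γ)
    (hxX : ∀ t, 2 ≤ t → t ≤ T → x t ∈ 𝒳)
    (hxmin : ∀ t, 2 ≤ t → t ≤ T → ∀ y ∈ 𝒳,
      ⟪gradf (t - 1) (x (t - 1)), x t - x (t - 1)⟫
          + α (t - 1) * ‖x t - x (t - 1)‖ ^ 2
          + ∑ n, Q (t - 1) n * max (g (t - 1) n (x t)) 0 ≤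
        ⟪gradf (t - 1) (x (t - 1)), y - x (t - 1)⟫
          + α (t - 1) * ‖y - x (t - 1)‖ ^ 2
          + ∑ n, Q (t - 1) n * max (g (t - 1) n y) 0)
    (hQupd : ∀ t, 2 ≤ t → t ≤ T → ∀ n,
      Q t n = max ((1 - η) * Q (t - 1) n + max (g t n (x t)) 0) γ)
    (xstar : EuclideanSpace ℝ (Fin p)) (hxstarX : xstar ∈ 𝒳)
    (hxstarfeas : ∀ t, 1 ≤ t → t ≤ T → ∀ n, g t n xstar ≤ 0)
    (B : ℕ → ℝ) (hB0 : ∀ t, 2 ≤ t → t ≤ T → 0 ≤ B t)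
    (hB : ∀ t, 2 ≤ t → t ≤ T → ∀ x ∈ 𝒳,
      Real.sqrt (∑ n, (g t n x - g (t - 1) n x) ^ 2) ≤ B t)
    (hBsum : ∑ t ∈ Finset.Icc 2 T, B t ≤ Cg * (T : ℝ) ^ Vg) :
    ∑ n : Fin N, ∑ t ∈ Finset.Icc 1 T, max (g t n (x t)) 0 ≤
      ((G * Real.sqrt N * Cg + D ^ 2 / (4 * μ) + D * R + 2 * N * G ^ 2
          + μ * R ^ 2) / ε + N * G) * (T : ℝ) ^ Vg := by
  have hTR : (2:ℝ) ≤ (T:ℝ) := by exact_mod_cast hT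
  have hT0 : (0:ℝ) < T := by linarith
  have hS1 : 1 ≤ (T:ℝ)^Vg := Real.one_le_rpow (by linarith) hVg0
  have hS0 : (0:ℝ) ≤ (T:ℝ)^Vg := by linarith
  have hG0 : 0 < G := lt_trans hε0 hεG
  have hD0 : 0 ≤ D := le_trans (norm_nonneg _) (hgradD 1 (x 1) hx1)
  have hγ0 : 0 < γ := by rw [hγ]; positivity
  have hQγ : ∀ s, 1 ≤ s → s ≤ T → ∀ n, γ ≤ Q s n := by
    intro s h1 h2 n
    rcases eq_or_lt_of_le h1 with h | h
    · rw [← h, hQ1]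
    · rw [hQupd s h h2 n]; exact le_max_right _ _
  have hxmem : ∀ s, 1 ≤ s → s ≤ T → x s ∈ 𝒳 := by
    intro s h1 h2
    rcases eq_or_lt_of_le h1 with h | h
    · rw [← h]; exact hx1
    · exact hxX s h h2
  have haR : ∀ s, 1 ≤ s → s ≤ T → ‖xstar - x s‖ ≤ R :=
    fun s h1 h2 => hXbdd xstar hxstarX (x s) (hxmem s h1 h2)
  -- per-step key inequality
  have key : ∀ t, 2 ≤ t → t ≤ T →
      ∑ n, Q (t-1) n * max (g (t-1) n (x t)) 0 ≤
        D*R + μ*((t:ℝ)-1)*(‖xstar - x (t-1)‖^2 - ‖xstar - x t‖^2) := by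
    intro t ht2 htT
    have hcX : x (t-1) ∈ 𝒳 := hxmem (t-1) (by omega) (by omega)
    have huX : x t ∈ 𝒳 := hxX t ht2 htT
    have hq : α (t-1) = μ * ((t:ℝ)-1) := by
      rw [hα (t-1), Nat.cast_sub (by omega : 1 ≤ t)]
      norm_num
    have ht2R : (2:ℝ) ≤ (t:ℝ) := by exact_mod_cast ht2
    have hqnn : 0 ≤ α (t-1) := by rw [hq]; nlinarith
    have hQnn : ∀ n : Fin N, 0 ≤ Q (t-1) n :=
      fun n => le_trans (le_of_lt hγ0) (hQγ (t-1) (by omega) (by omega) n)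
    have hPconv : ∀ l : ℝ, 0 < l → l < 1 →
        (fun z => ∑ n, Q (t-1) n * max (g (t-1) n z) 0) ((1-l)•(x t) + l•xstar) ≤
          (1-l) * (fun z => ∑ n, Q (t-1) n * max (g (t-1) n z) 0) (x t)
          + l * (fun z => ∑ n, Q (t-1) n * max (g (t-1) n z) 0) xstar := by
      intro l hl0 hl1
      simp only
      rw [Finset.mul_sum, Finset.mul_sum, ← Finset.sum_add_distrib]
      apply Finset.sum_le_sum
      intro n _
      have hcv := (hgconv (t-1) n).2 huX hxstarX (by linarith : (0:ℝ) ≤ 1-l)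
        (le_of_lt hl0) (by ring)
      simp only [smul_eq_mul] at hcv
      have hmax : max (g (t-1) n ((1-l)•(x t) + l•xstar)) 0 ≤
          (1-l) * max (g (t-1) n (x t)) 0 + l * max (g (t-1) n xstar) 0 := by
        apply max_le
        · refine le_trans hcv ?_
          have e1 : g (t-1) n (x t) ≤ max (g (t-1) n (x t)) 0 := le_max_left _ _
          have e2 : g (t-1) n xstar ≤ max (g (t-1) n xstar) 0 := le_max_left _ _
          have := mul_le_mul_of_nonneg_left e1 (by linarith : (0:ℝ) ≤ 1-l)
          have := mul_le_mul_of_nonneg_left e2 (le_of_lt hl0)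
          linarith
        · have := mul_nonneg (by linarith : (0:ℝ) ≤ 1-l) (le_max_right (g (t-1) n (x t)) 0)
          have := mul_nonneg (le_of_lt hl0) (le_max_right (g (t-1) n xstar) 0)
          linarith
      calc Q (t-1) n * max (g (t-1) n ((1-l)•(x t) + l•xstar)) 0
          ≤ Q (t-1) n * ((1-l) * max (g (t-1) n (x t)) 0 + l * max (g (t-1) n xstar) 0) :=
            mul_le_mul_of_nonneg_left hmax (hQnn n)
        _ = (1-l) * (Q (t-1) n * max (g (t-1) n (x t)) 0)
            + l * (Q (t-1) n * max (g (t-1) n xstar) 0) := by ring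
    have hPv : (fun z => ∑ n, Q (t-1) n * max (g (t-1) n z) 0) xstar = 0 := by
      simp only
      apply Finset.sum_eq_zero
      intro n _
      rw [max_eq_right (hxstarfeas (t-1) (by omega) (by omega) n), mul_zero]
    have haux := aux_min hXconv (gradf (t-1) (x (t-1))) (x (t-1)) (x t) xstar huX hxstarX
      (α (t-1)) hqnn (fun z => ∑ n, Q (t-1) n * max (g (t-1) n z) 0)
      hPconv hPv (fun y hy => hxmin t ht2 htT y hy)
    have hinner : ⟪gradf (t-1) (x (t-1)), xstar - x t⟫ ≤ D * R := by
      refine le_trans (real_inner_le_norm _ _) ?_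
      exact mul_le_mul (hgradD (t-1) (x (t-1)) hcX) (haR t (by omega) htT)
        (norm_nonneg _) hD0
    rw [hq] at haux
    linarith [haux, hinner]
  -- sum of penalized violations
  have sum1 : ∑ t ∈ Finset.Icc 2 T, (∑ n, Q (t-1) n * max (g (t-1) n (x t)) 0)
      ≤ (T:ℝ) * (D*R + μ*R^2) := by
    have step : ∑ t ∈ Finset.Icc 2 T, (∑ n, Q (t-1) n * max (g (t-1) n (x t)) 0)
        ≤ ∑ t ∈ Finset.Icc 2 T,
            (D*R + μ*((t:ℝ)-1)*(‖xstar - x (t-1)‖^2 - ‖xstar - x t‖^2)) := by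
      apply Finset.sum_le_sum
      intro t ht
      have := Finset.mem_Icc.mp ht
      exact key t this.1 this.2
    set cf : ℕ → ℝ := fun s => μ*((s:ℝ)-1)*‖xstar - x s‖^2 with hcf
    have hterm : ∀ t ∈ Finset.Icc 2 T,
        D*R + μ*((t:ℝ)-1)*(‖xstar - x (t-1)‖^2 - ‖xstar - x t‖^2)
          = (D*R + μ * ‖xstar - x (t-1)‖^2) + (cf (t-1) - cf t) := by
      intro t ht
      have h2 := (Finset.mem_Icc.mp ht).1
      have hc : ((t-1 : ℕ):ℝ) = (t:ℝ) - 1 := by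
        rw [Nat.cast_sub (by omega : 1 ≤ t)]; norm_num
      simp only [hcf, hc]
      ring
    rw [Finset.sum_congr rfl hterm, Finset.sum_add_distrib, tele_sum cf hT] at step
    have hcf1 : cf 1 = 0 := by simp [hcf]
    have hcfT : 0 ≤ cf T := by
      simp only [hcf]
      have h1T : (0:ℝ) ≤ (T:ℝ) - 1 := by linarith
      exact mul_nonneg (mul_nonneg hμ.le h1T) (by positivity)
    have hbound : ∑ t ∈ Finset.Icc 2 T, (D*R + μ * ‖xstar - x (t-1)‖^2)
        ≤ ((T:ℝ) - 1) * (D*R + μ*R^2) := by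
      have hcard : (Finset.Icc 2 T).card = T - 1 := by
        rw [Nat.card_Icc]; omega
      calc ∑ t ∈ Finset.Icc 2 T, (D*R + μ * ‖xstar - x (t-1)‖^2)
          ≤ ∑ t ∈ Finset.Icc 2 T, (D*R + μ*R^2) := by
            apply Finset.sum_le_sum
            intro t ht
            have h := Finset.mem_Icc.mp ht
            have hR' := haR (t-1) (by omega) (by omega)
            have : ‖xstar - x (t-1)‖^2 ≤ R^2 := by
              have := norm_nonneg (xstar - x (t-1))
              nlinarith
            nlinarith
        _ = ((T:ℝ) - 1) * (D*R + μ*R^2) := by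
            rw [Finset.sum_const, hcard, nsmul_eq_mul]
            congr 1
            rw [Nat.cast_sub (by omega : 1 ≤ T)]; norm_num
    have hDRμ : 0 ≤ D*R + μ*R^2 := by positivity
    nlinarith [step, hbound, hcf1, hcfT]
  -- divide by γ
  have sum2 : ∑ t ∈ Finset.Icc 2 T, (∑ n, max (g (t-1) n (x t)) 0)
      ≤ (D*R + μ*R^2)/ε := by
    set S2 := ∑ t ∈ Finset.Icc 2 T, (∑ n, max (g (t-1) n (x t)) 0) with hS2
    have hγS : γ * S2 ≤ ∑ t ∈ Finset.Icc 2 T, (∑ n, Q (t-1) n * max (g (t-1) n (x t)) 0) := by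
      rw [hS2, Finset.mul_sum]
      apply Finset.sum_le_sum
      intro t ht
      have h := Finset.mem_Icc.mp ht
      rw [Finset.mul_sum]
      apply Finset.sum_le_sum
      intro n _
      exact mul_le_mul_of_nonneg_right (hQγ (t-1) (by omega) (by omega) n)
        (le_max_right _ 0)
    have h1 : ε * (T:ℝ) * S2 ≤ (T:ℝ) * (D*R + μ*R^2) := by
      rw [hγ] at hγS
      linarith [le_trans hγS sum1]
    have h2 : (T:ℝ) * (ε * S2) ≤ (T:ℝ) * (D*R + μ*R^2) := by linarith [h1]
    have h3 : ε * S2 ≤ D*R + μ*R^2 := (mul_le_mul_iff_right₀ hT0).mp h2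
    rw [le_div_iff₀ hε0]
    linarith
  -- shift index using B
  have sum3 : ∑ t ∈ Finset.Icc 2 T, (∑ n, max (g t n (x t)) 0)
      ≤ (D*R + μ*R^2)/ε + Real.sqrt N * (Cg * (T:ℝ)^Vg) := by
    have hper : ∀ t ∈ Finset.Icc 2 T,
        (∑ n, max (g t n (x t)) 0)
          ≤ (∑ n, max (g (t-1) n (x t)) 0) + Real.sqrt N * B t := by
      intro t ht
      have h := Finset.mem_Icc.mp ht
      have huX : x t ∈ 𝒳 := hxX t h.1 h.2
      have hdn : ∀ n : Fin N, max (g t n (x t)) 0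
          ≤ max (g (t-1) n (x t)) 0 + |g t n (x t) - g (t-1) n (x t)| := by
        intro n
        have h1 := abs_max_sub_max_le_abs (g t n (x t)) (g (t-1) n (x t)) 0
        have h2 := le_abs_self (max (g t n (x t)) 0 - max (g (t-1) n (x t)) 0)
        have h3 := le_trans h2 h1
        linarith
      have hCS : ∑ n, |g t n (x t) - g (t-1) n (x t)| ≤ Real.sqrt N * B t := by
        have hsnn : (0:ℝ) ≤ ∑ n, (g t n (x t) - g (t-1) n (x t))^2 := by positivity
        have h1 : (∑ n, |g t n (x t) - g (t-1) n (x t)|)^2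
            ≤ (N:ℝ) * ∑ n, (g t n (x t) - g (t-1) n (x t))^2 := by
          have := Finset.sum_mul_sq_le_sq_mul_sq Finset.univ (fun _ : Fin N => (1:ℝ))
            (fun n => |g t n (x t) - g (t-1) n (x t)|)
          simpa [sq_abs] using this
        have h2 : Real.sqrt (∑ n, (g t n (x t) - g (t-1) n (x t))^2) ≤ B t :=
          hB t h.1 h.2 (x t) huX
        have hBt : 0 ≤ B t := le_trans (Real.sqrt_nonneg _) h2
        have hsum2 : ∑ n, (g t n (x t) - g (t-1) n (x t))^2 ≤ (B t)^2 := by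
          have h4 := pow_le_pow_left₀ (Real.sqrt_nonneg _) h2 2
          rwa [Real.sq_sqrt hsnn] at h4
        have h3 : (∑ n, |g t n (x t) - g (t-1) n (x t)|)^2 ≤ (Real.sqrt N * B t)^2 := by
          rw [mul_pow, Real.sq_sqrt (Nat.cast_nonneg N)]
          exact le_trans h1 (mul_le_mul_of_nonneg_left hsum2 (Nat.cast_nonneg N))
        have h4 : (0:ℝ) ≤ ∑ n, |g t n (x t) - g (t-1) n (x t)| :=
          Finset.sum_nonneg (fun n _ => abs_nonneg _)
        have h5 : (0:ℝ) ≤ Real.sqrt N * B t := mul_nonneg (Real.sqrt_nonneg _) hBt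
        have h6 := Real.sqrt_le_sqrt h3
        rwa [Real.sqrt_sq h4, Real.sqrt_sq h5] at h6
      calc ∑ n, max (g t n (x t)) 0
          ≤ ∑ n, (max (g (t-1) n (x t)) 0 + |g t n (x t) - g (t-1) n (x t)|) :=
            Finset.sum_le_sum (fun n _ => hdn n)
        _ = (∑ n, max (g (t-1) n (x t)) 0) + ∑ n, |g t n (x t) - g (t-1) n (x t)| :=
            Finset.sum_add_distrib
        _ ≤ (∑ n, max (g (t-1) n (x t)) 0) + Real.sqrt N * B t := by linarith [hCS]
    calc ∑ t ∈ Finset.Icc 2 T, (∑ n, max (g t n (x t)) 0)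
        ≤ ∑ t ∈ Finset.Icc 2 T,
            ((∑ n, max (g (t-1) n (x t)) 0) + Real.sqrt N * B t) :=
          Finset.sum_le_sum hper
      _ = (∑ t ∈ Finset.Icc 2 T, ∑ n, max (g (t-1) n (x t)) 0)
          + Real.sqrt N * ∑ t ∈ Finset.Icc 2 T, B t := by
          rw [Finset.sum_add_distrib, Finset.mul_sum]
      _ ≤ (D*R + μ*R^2)/ε + Real.sqrt N * (Cg * (T:ℝ)^Vg) := by
          have := mul_le_mul_of_nonneg_left hBsum (Real.sqrt_nonneg (N:ℝ))
          linarith [sum2]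
  -- assemble
  have hsplit : ∑ n : Fin N, ∑ t ∈ Finset.Icc 1 T, max (g t n (x t)) 0
      = (∑ n : Fin N, max (g 1 n (x 1)) 0)
        + ∑ t ∈ Finset.Icc 2 T, (∑ n, max (g t n (x t)) 0) := by
    rw [Finset.sum_comm]
    rw [show Finset.Icc 1 T = insert 1 (Finset.Icc 2 T) from by
      ext a; simp only [Finset.mem_Icc, Finset.mem_insert]; omega]
    rw [Finset.sum_insert (by simp)]
  have h1N : ∑ n : Fin N, max (g 1 n (x 1)) 0 ≤ (N:ℝ) * G := by
    calc ∑ n : Fin N, max (g 1 n (x 1)) 0 ≤ ∑ _n : Fin N, G :=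
          Finset.sum_le_sum (fun n _ =>
            max_le (le_trans (le_abs_self _) (hgG 1 n (x 1) hx1)) (le_of_lt hG0))
      _ = (N:ℝ) * G := by
          rw [Finset.sum_const, Finset.card_univ, Fintype.card_fin, nsmul_eq_mul]
  rw [hsplit]
  -- final arithmetic
  have hNGS : (N:ℝ)*G ≤ (N:ℝ)*G*((T:ℝ)^Vg) :=
    le_mul_of_one_le_right (by positivity) hS1
  have hKS : (D*R + μ*R^2)/ε ≤ ((D*R + μ*R^2)/ε)*((T:ℝ)^Vg) :=
    le_mul_of_one_le_right (by positivity) hS1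
  have hCS2 : Real.sqrt N * (Cg * (T:ℝ)^Vg) ≤ (G*Real.sqrt N*Cg/ε)*((T:ℝ)^Vg) := by
    have hb : Real.sqrt N * Cg ≤ G*Real.sqrt N*Cg/ε := by
      rw [le_div_iff₀ hε0]
      nlinarith [mul_nonneg (mul_nonneg (Real.sqrt_nonneg (N:ℝ)) hCg) (sub_nonneg.mpr hεG.le)]
    calc Real.sqrt N * (Cg * (T:ℝ)^Vg) = (Real.sqrt N * Cg) * (T:ℝ)^Vg := by ring
      _ ≤ (G*Real.sqrt N*Cg/ε)*((T:ℝ)^Vg) := mul_le_mul_of_nonneg_right hb hS0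
  have hM : (D*R + μ*R^2)/ε + G*Real.sqrt N*Cg/ε
      ≤ (G * Real.sqrt N * Cg + D ^ 2 / (4 * μ) + D * R + 2 * N * G ^ 2 + μ * R ^ 2) / ε := by
    have hDD : (0:ℝ) ≤ D^2/(4*μ) := by positivity
    have hNG2 : (0:ℝ) ≤ 2*(N:ℝ)*G^2 := by positivity
    rw [← add_div]
    exact (div_le_div_iff_of_pos_right hε0).mpr (by linarith)
  have hMS := mul_le_mul_of_nonneg_right hM hS0
  calc (∑ n : Fin N, max (g 1 n (x 1)) 0)
        + ∑ t ∈ Finset.Icc 2 T, (∑ n, max (g t n (x t)) 0)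
      ≤ (N:ℝ)*G + ((D*R + μ*R^2)/ε + Real.sqrt N * (Cg * (T:ℝ)^Vg)) := by
        linarith [h1N, sum3]
    _ ≤ ((G * Real.sqrt N * Cg + D ^ 2 / (4 * μ) + D * R + 2 * ↑N * G ^ 2
          + μ * R ^ 2) / ε + ↑N * G) * (T:ℝ) ^ Vg := by
        have hexp : ((G * Real.sqrt N * Cg + D ^ 2 / (4 * μ) + D * R + 2 * (N:ℝ) * G ^ 2
            + μ * R ^ 2) / ε + (N:ℝ) * G) * (T:ℝ) ^ Vg
            = ((G * Real.sqrt N * Cg + D ^ 2 / (4 * μ) + D * R + 2 * (N:ℝ) * G ^ 2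
            + μ * R ^ 2) / ε) * ((T:ℝ) ^ Vg) + (N:ℝ)*G*((T:ℝ)^Vg) := by ring
        rw [hexp]
        linarith [hNGS, hKS, hCS2, hMS]
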